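/- For any graphs G and H of orders n₁ and n₂ respectively, γ_R(G □ H) ≤ 2γ(G)γ(H) + (n₁ − γ(G))(n₂ − γ(H)). -/

import Mathlib

open Finset

/-- A set `S` is a dominating set of `G` if every vertex outside `S` has a neighbor in `S`. -/
def IsDominatingSet {V : Type*} (G : SimpleGraph V) (S : Set V) : Prop :=
  ∀ v, v ∉ S → ∃ u ∈ S, G.Adj u v

/-- The domination number `γ(G)`. -/
noncomputable def domNum {V : Type*} [Fintype V] (G : SimpleGraph V) : ℕ :=
  sInf {n | ∃ S : Finset V, IsDominatingSet G ↑S ∧ S.card = n}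

/-- A Roman dominating function: values in {0,1,2}, every vertex of value 0 has a
neighbor of value 2. -/
def IsRDF {V : Type*} (G : SimpleGraph V) (f : V → ℕ) : Prop :=
  (∀ v, f v ≤ 2) ∧ ∀ v, f v = 0 → ∃ u, G.Adj u v ∧ f u = 2

/-- The Roman domination number `γ_R(G)`. -/
noncomputable def romanDomNum {V : Type*} [Fintype V] (G : SimpleGraph V) : ℕ :=
  sInf {n | ∃ f : V → ℕ, IsRDF G f ∧ ∑ v, f v = n}

/-- The strong product of graphs. -/
def strongProd {V W : Type*} (G : SimpleGraph V) (H : SimpleGraph W) :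
    SimpleGraph (V × W) where
  Adj x y := x ≠ y ∧ (x.1 = y.1 ∨ G.Adj x.1 y.1) ∧ (x.2 = y.2 ∨ H.Adj x.2 y.2)
  symm := ⟨fun x y => by
    rintro ⟨h, h1, h2⟩
    refine ⟨h.symm, ?_, ?_⟩
    · cases h1 with
      | inl h => exact Or.inl h.symm
      | inr h => exact Or.inr h.symm
    · cases h2 with
      | inl h => exact Or.inl h.symm
      | inr h => exact Or.inr h.symm⟩
  loopless := ⟨fun x => by simp⟩

/-- `G` has an efficient dominating set: a dominating set whose elements have
pairwise disjoint closed neighborhoods. -/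
def HasEfficientDomSet {V : Type*} (G : SimpleGraph V) : Prop :=
  ∃ S : Finset V, IsDominatingSet G ↑S ∧
    ∀ u ∈ S, ∀ v ∈ S, u ≠ v →
      Disjoint (insert u (G.neighborSet u)) (insert v (G.neighborSet v))


lemma domNum_mem {V : Type*} [Fintype V] (G : SimpleGraph V) :
    ∃ S : Finset V, IsDominatingSet G ↑S ∧ S.card = domNum G := by
  have hne : {n | ∃ S : Finset V, IsDominatingSet G ↑S ∧ S.card = n}.Nonempty := by
    exact ⟨(univ : Finset V).card, univ, fun v hv => by simp at hv, rfl⟩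
  have := Nat.sInf_mem hne
  exact this

theorem stmt16 {V W : Type*} [Fintype V] [Fintype W]
    (G : SimpleGraph V) (H : SimpleGraph W) :
    (romanDomNum (G.boxProd H) : ℤ) ≤
      2 * domNum G * domNum H +
        ((Fintype.card V : ℤ) - domNum G) * ((Fintype.card W : ℤ) - domNum H) := by
  classical
  obtain ⟨S₁, hd₁, hc₁⟩ := domNum_mem G
  obtain ⟨S₂, hd₂, hc₂⟩ := domNum_mem H
  have ha : S₁.card ≤ Fintype.card V := Finset.card_le_univ S₁
  have hb : S₂.card ≤ Fintype.card W := Finset.card_le_univ S₂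
  set f : V × W → ℕ := fun p =>
    if p.1 ∈ S₁ then (if p.2 ∈ S₂ then 2 else 0) else (if p.2 ∈ S₂ then 0 else 1) with hf
  have hRDF : IsRDF (G.boxProd H) f := by
    constructor
    · intro v
      simp only [hf]
      split <;> split <;> omega
    · rintro ⟨x, y⟩ h0
      simp only [hf] at h0
      by_cases hx : x ∈ S₁
      · by_cases hy : y ∈ S₂
        · simp [hx, hy] at h0
        · obtain ⟨u, hu, hadj⟩ := hd₂ y hy
          refine ⟨(x, u), ?_, ?_⟩
          · exact (SimpleGraph.boxProd_adj).2 (Or.inr ⟨hadj, rfl⟩)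
          · simp [hf, hx, Finset.mem_coe.mp hu]
      · by_cases hy : y ∈ S₂
        · obtain ⟨u, hu, hadj⟩ := hd₁ x hx
          refine ⟨(u, y), ?_, ?_⟩
          · exact (SimpleGraph.boxProd_adj).2 (Or.inl ⟨hadj, rfl⟩)
          · simp [hf, Finset.mem_coe.mp hu, hy]
        · simp [hx, hy] at h0
  have hsum : ∑ v, f v =
      2 * S₁.card * S₂.card + (Fintype.card V - S₁.card) * (Fintype.card W - S₂.card) := by
    rw [Fintype.sum_prod_type]
    have inner : ∀ x : V, ∑ y : W, f (x, y) =
        if x ∈ S₁ then 2 * S₂.card else Fintype.card W - S₂.card := by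
      intro x
      by_cases hx : x ∈ S₁
      · simp only [hf, hx, if_true]
        rw [Finset.sum_ite_mem, Finset.univ_inter, Finset.sum_const, smul_eq_mul]
        simp [mul_comm]
      · simp only [hf, hx, if_false]
        have : ∀ y : W, (if y ∈ S₂ then 0 else 1) = if y ∈ S₂ᶜ then 1 else 0 := by
          intro y; by_cases hy : y ∈ S₂ <;> simp [hy]
        simp only [this]
        rw [Finset.sum_ite_mem, Finset.univ_inter, Finset.sum_const, smul_eq_mul,
          Finset.card_compl]
        simp
    simp only [inner]
    rw [Finset.sum_ite, Finset.sum_const, Finset.sum_const, smul_eq_mul, smul_eq_mul]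
    have h1 : (univ.filter (fun x => x ∈ S₁)).card = S₁.card := by
      simp [Finset.filter_mem_eq_inter]
    have h2 : (univ.filter (fun x => ¬ x ∈ S₁)).card = Fintype.card V - S₁.card := by
      rw [Finset.filter_not]
      simp [Finset.card_sdiff_of_subset (Finset.subset_univ S₁), Finset.filter_mem_eq_inter]
    rw [h1, h2, ← mul_assoc, mul_comm S₁.card 2]
  have hle : romanDomNum (G.boxProd H) ≤
      2 * S₁.card * S₂.card + (Fintype.card V - S₁.card) * (Fintype.card W - S₂.card) := by
    rw [← hsum]
    exact Nat.sInf_le ⟨f, hRDF, rfl⟩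
  rw [hc₁] at hle ha; rw [hc₂] at hle hb
  have := (Nat.cast_le (α := ℤ)).2 hle
  push_cast [Nat.cast_sub ha, Nat.cast_sub hb] at this
  linarith
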